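/- Let k_n = √n / (K_n · exp(l ∘ ψ⁻¹(log n + K_n))) where K_n → ∞ with K_n/log log n → 0, and suppose l ∘ ψ⁻¹(x) ≤ x/2 − θ log x + K for all large x, with θ > 1. Then for every θ' ∈ (1, θ), k_n ≥ (log n)^{θ'} for all n large enough; in particular k_n/log log n → ∞ and k_n/√n → 0. -/

import Mathlib

open Filter

theorem stmt19 (θ C x₀ : ℝ) (hθ : 1 < θ)
    (K : ℕ → ℝ) (hKtop : Tendsto K atTop atTop)
    (hKsmall : Tendsto (fun n : ℕ => K n / Real.log (Real.log n)) atTop (nhds 0))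
    (g : ℝ → ℝ) (hgtop : Tendsto g atTop atTop)
    (hg : ∀ x ≥ x₀, g x ≤ x / 2 - θ * Real.log x + C)
    (k : ℕ → ℝ)
    (hk : ∀ n : ℕ, k n = Real.sqrt n / (K n * Real.exp (g (Real.log n + K n)))) :
    (∀ θ' : ℝ, 1 < θ' → θ' < θ →
      ∀ᶠ n : ℕ in atTop, Real.log n ^ θ' ≤ k n) ∧
    Tendsto (fun n : ℕ => k n / Real.log (Real.log n)) atTop atTop ∧
    Tendsto (fun n : ℕ => k n / Real.sqrt n) atTop (nhds 0) := by
  have htL : Tendsto (fun n : ℕ => Real.log n) atTop atTop :=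
    Real.tendsto_log_atTop.comp tendsto_natCast_atTop_atTop
  have htLL : Tendsto (fun n : ℕ => Real.log (Real.log n)) atTop atTop :=
    Real.tendsto_log_atTop.comp htL
  have htsum : Tendsto (fun n : ℕ => Real.log n + K n) atTop atTop :=
    Tendsto.atTop_add_atTop htL hKtop
  -- main eventual lower bound
  have main : ∀ θ' : ℝ, 1 < θ' → θ' < θ →
      ∀ᶠ n : ℕ in atTop, Real.log n ^ θ' ≤ k n := by
    intro θ' hθ'1 hθ'θ
    set ε := θ - θ' with hεdef
    have hε : 0 < ε := by rw [hεdef]; linarith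
    have hLrp : Tendsto (fun n : ℕ => Real.log n ^ (ε/3)) atTop atTop :=
      (tendsto_rpow_atTop (by linarith : (0:ℝ) < ε/3)).comp htL
    have E5 : ∀ᶠ n : ℕ in atTop, K n / Real.log (Real.log n) ≤ ε/6 :=
      hKsmall.eventually (eventually_le_nhds (by linarith))
    filter_upwards [htL.eventually_ge_atTop 1, htLL.eventually_ge_atTop 1,
      hKtop.eventually_ge_atTop 1, htsum.eventually_ge_atTop x₀, E5,
      hLrp.eventually_ge_atTop (Real.exp C)] with n h1 h2 h3 h4 h5 h6
    set L := Real.log (n : ℝ) with hLdef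
    have hL0 : (0:ℝ) < L := lt_of_lt_of_le one_pos h1
    have hK0 : (0:ℝ) < K n := lt_of_lt_of_le one_pos h3
    have hLK0 : (0:ℝ) < L + K n := by linarith
    have hn1 : (1:ℝ) < (n : ℝ) := by
      by_contra h
      push_neg at h
      have := Real.log_nonpos (Nat.cast_nonneg n) h
      rw [← hLdef] at this
      linarith
    -- √n = exp (L/2)
    have hsqrt : Real.sqrt n = Real.exp (L / 2) := by
      rw [Real.sqrt_eq_rpow, Real.rpow_def_of_pos (by linarith : (0:ℝ) < (n:ℝ)), ← hLdef]
      ring_nf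
    -- the exponential bound
    have h7 : (L + K n) ^ θ = Real.exp (θ * Real.log (L + K n)) := by
      rw [Real.rpow_def_of_pos hLK0, mul_comm]
    have hgle := hg (L + K n) h4
    have hEexp : Real.exp (g (L + K n)) * (L + K n) ^ θ ≤
        Real.sqrt n * (Real.exp (K n / 2) * Real.exp C) := by
      rw [h7, ← Real.exp_add, hsqrt, ← Real.exp_add, ← Real.exp_add]
      exact Real.exp_le_exp.2 (by linarith)
    -- bound on the denominator pieces
    have hLL0 : (0:ℝ) < Real.log L := lt_of_lt_of_le one_pos h2
    have hKle : K n ≤ ε/6 * Real.log L := by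
      rw [div_le_iff₀ hLL0] at h5
      linarith
    have hlogL : Real.log L ≤ L ^ (ε/3) / (ε/3) :=
      Real.log_le_rpow_div hL0.le (by linarith)
    have hrp_nonneg : (0:ℝ) ≤ L ^ (ε/3) := Real.rpow_nonneg hL0.le _
    have hK1 : K n ≤ L ^ (ε/3) := by
      calc K n ≤ ε/6 * Real.log L := hKle
        _ ≤ ε/6 * (L ^ (ε/3) / (ε/3)) :=
            mul_le_mul_of_nonneg_left hlogL (by linarith)
        _ = 1/2 * L ^ (ε/3) := by field_simp; ring
        _ ≤ L ^ (ε/3) := by linarith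
    have hK2 : Real.exp (K n / 2) ≤ L ^ (ε/12) := by
      rw [Real.rpow_def_of_pos hL0]
      exact Real.exp_le_exp.2 (by nlinarith)
    have hD : K n * (Real.exp (K n / 2) * Real.exp C) ≤ L ^ ε := by
      calc K n * (Real.exp (K n / 2) * Real.exp C)
          ≤ L ^ (ε/3) * (L ^ (ε/12) * L ^ (ε/3)) := by
            apply mul_le_mul hK1 (mul_le_mul hK2 h6 (Real.exp_pos C).le
              (Real.rpow_nonneg hL0.le _)) (by positivity) hrp_nonneg
        _ = L ^ (ε/3 + (ε/12 + ε/3)) := by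
            rw [Real.rpow_add hL0, Real.rpow_add hL0]
        _ ≤ L ^ ε := Real.rpow_le_rpow_of_exponent_le h1 (by linarith)
    have hnum : L ^ θ ≤ (L + K n) ^ θ :=
      Real.rpow_le_rpow hL0.le (by linarith) (by linarith)
    have hDpos : (0:ℝ) < K n * (Real.exp (K n / 2) * Real.exp C) := by positivity
    have hKEpos : (0:ℝ) < K n * Real.exp (g (L + K n)) := by positivity
    have hθε : θ' = θ - ε := by rw [hεdef]; ring
    rw [hk n, ← hLdef]
    calc L ^ θ' = L ^ θ / L ^ ε := by rw [hθε, Real.rpow_sub hL0]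
      _ ≤ (L + K n) ^ θ / (K n * (Real.exp (K n / 2) * Real.exp C)) :=
          div_le_div₀ (Real.rpow_nonneg hLK0.le θ) hnum hDpos hD
      _ ≤ Real.sqrt n / (K n * Real.exp (g (L + K n))) := by
          rw [div_le_div_iff₀ hDpos hKEpos]
          calc (L + K n) ^ θ * (K n * Real.exp (g (L + K n)))
              = K n * (Real.exp (g (L + K n)) * (L + K n) ^ θ) := by ring
            _ ≤ K n * (Real.sqrt n * (Real.exp (K n / 2) * Real.exp C)) :=
                mul_le_mul_of_nonneg_left hEexp hK0.le
            _ = Real.sqrt n * (K n * (Real.exp (K n / 2) * Real.exp C)) := by ring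
  refine ⟨main, ?_, ?_⟩
  · -- k n / log log n → ∞
    set θ'' := (1 + θ)/2 with hθ''
    have h1' : 1 < θ'' := by rw [hθ'']; linarith
    have h2' : θ'' < θ := by rw [hθ'']; linarith
    clear_value θ''
    have hev : ∀ᶠ n : ℕ in atTop,
        (θ'' - 1) * Real.log n ≤ k n / Real.log (Real.log n) := by
      filter_upwards [main θ'' h1' h2', htL.eventually_ge_atTop 1,
        htLL.eventually_ge_atTop 1] with n ha hb hc
      have hL0 : (0:ℝ) < Real.log n := lt_of_lt_of_le one_pos hb
      have hLL0 : (0:ℝ) < Real.log (Real.log n) := lt_of_lt_of_le one_pos hc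
      have hstep : (θ'' - 1) * Real.log n ≤ Real.log n ^ θ'' / Real.log (Real.log n) := by
        rw [le_div_iff₀ hLL0]
        have hlog : Real.log (Real.log n) ≤ Real.log n ^ (θ'' - 1) / (θ'' - 1) :=
          Real.log_le_rpow_div hL0.le (by linarith)
        have heq : Real.log n * Real.log n ^ (θ'' - 1) = Real.log n ^ θ'' := by
          have h := Real.rpow_add hL0 1 (θ'' - 1)
          rw [Real.rpow_one] at h
          rw [← h]
          congr 1
          ring
        calc (θ'' - 1) * Real.log n * Real.log (Real.log n)
            ≤ (θ'' - 1) * Real.log n * (Real.log n ^ (θ'' - 1) / (θ'' - 1)) :=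
              mul_le_mul_of_nonneg_left hlog (by nlinarith)
          _ = Real.log n * Real.log n ^ (θ'' - 1) := by
              have hne : θ'' - 1 ≠ 0 := by linarith
              field_simp
          _ = Real.log n ^ θ'' := heq
      have hstep2 : Real.log n ^ θ'' / Real.log (Real.log n)
          ≤ k n / Real.log (Real.log n) := (div_le_div_iff_of_pos_right hLL0).2 ha
      linarith
    exact tendsto_atTop_mono' atTop hev
      ((tendsto_const_mul_atTop_of_pos (by linarith : (0:ℝ) < θ'' - 1)).2 htL)
  · -- k n / √n → 0
    have hD : Tendsto (fun n : ℕ => K n * Real.exp (g (Real.log n + K n))) atTop atTop :=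
      hKtop.atTop_mul_atTop₀ (Real.tendsto_exp_atTop.comp (hgtop.comp htsum))
    refine hD.inv_tendsto_atTop.congr' ?_
    filter_upwards [htL.eventually_ge_atTop 1, hKtop.eventually_ge_atTop 1] with n hb hK
    have hn1 : (1:ℝ) ≤ (n : ℝ) := by
      by_contra h
      push_neg at h
      have := Real.log_nonpos (Nat.cast_nonneg n) h.le
      linarith
    have hs : (0:ℝ) < Real.sqrt n := Real.sqrt_pos.2 (by linarith)
    have hKE : K n * Real.exp (g (Real.log n + K n)) ≠ 0 := by positivity
    simp only [Pi.inv_apply]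
    rw [hk n]
    field_simp
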